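/- A nilpotent evolution algebra E of type [n,1,m] (so dim Ann(E) = n, dim Ann²(E) = n+1, dim E = n+1+m) over a field is indecomposable if and only if Ann(E) ⊆ E². -/

import Mathlib

/-- The multiplication of a (not necessarily associative) `F`-algebra structure on `A`,
given as a bilinear map. -/
abbrev Mul2 (F A : Type*) [Field F] [AddCommGroup A] [Module F A] :=
  A →ₗ[F] A →ₗ[F] A

variable {F A : Type*} [Field F] [AddCommGroup A] [Module F A]

/-- A submodule is an ideal if it absorbs multiplication on both sides. -/
def IsIdeal (m : Mul2 F A) (I : Submodule F A) : Prop :=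
  ∀ x ∈ I, ∀ y : A, m x y ∈ I ∧ m y x ∈ I

/-- An algebra is decomposable if it is the direct sum of two nonzero ideals. -/
def Decomposable (m : Mul2 F A) : Prop :=
  ∃ I J : Submodule F A, IsIdeal m I ∧ IsIdeal m J ∧ I ≠ ⊥ ∧ J ≠ ⊥ ∧
    I ⊓ J = ⊥ ∧ I ⊔ J = ⊤

/-- The set of `x` with `x A ⊆ N` and `A x ⊆ N`, as a submodule. -/
def annOver (m : Mul2 F A) (N : Submodule F A) : Submodule F A where
  carrier := {x | ∀ y : A, m x y ∈ N ∧ m y x ∈ N}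
  add_mem' := by
    intro a b ha hb y
    constructor
    · simpa using N.add_mem (ha y).1 (hb y).1
    · simpa using N.add_mem (ha y).2 (hb y).2
  zero_mem' := by intro y; simp
  smul_mem' := by
    intro c a ha y
    constructor
    · simpa using N.smul_mem c (ha y).1
    · simpa using N.smul_mem c (ha y).2

/-- The annihilator `{x | xA = Ax = 0}`. -/
def annA (m : Mul2 F A) : Submodule F A := annOver m ⊥

/-- The upper annihilating series: `Ann⁰ = 0`, `Annⁱ/Annⁱ⁻¹ = Ann(A/Annⁱ⁻¹)`. -/
def annSeries (m : Mul2 F A) : ℕ → Submodule F A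
  | 0 => ⊥
  | (k+1) => annOver m (annSeries m k)

/-- The span of all products of elements of `I` with elements of `J`. -/
def mulSub (m : Mul2 F A) (I J : Submodule F A) : Submodule F A :=
  Submodule.span F {z | ∃ x ∈ I, ∃ y ∈ J, z = m x y}

/-- `A²`, the span of all products. -/
def sqA (m : Mul2 F A) : Submodule F A := mulSub m ⊤ ⊤

/-- Right powers: `rpow 0 = A = A^{<1>}`, `rpow (k+1) = (rpow k) · A`. -/
def rpow (m : Mul2 F A) : ℕ → Submodule F A
  | 0 => ⊤
  | (k+1) => mulSub m (rpow m k) ⊤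

/-- Full powers: `apow 0 = A = A¹`, `apow (k+1) = Σ_{i+j=k} (apow i)(apow j)`,
i.e. `A^{k+2} = Σ_{i=1}^{k+1} Aⁱ A^{k+2-i}`. -/
def apow (m : Mul2 F A) : ℕ → Submodule F A
  | 0 => ⊤
  | (k+1) => ⨆ i : Fin (k+1), mulSub m (apow m i.1) (apow m (k - i.1))
  decreasing_by
  · exact i.2
  · exact Nat.lt_succ_of_le (Nat.sub_le _ _)

/-- `A` is nilpotent: `Aⁿ = 0` for some `n`. -/
def IsNilpotentAlg (m : Mul2 F A) : Prop := ∃ n, apow m n = ⊥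

/-- `A` is right nilpotent: `A^{<n>} = 0` for some `n`. -/
def IsRightNilpotentAlg (m : Mul2 F A) : Prop := ∃ n, rpow m n = ⊥

/-- A basis is natural if products of distinct basis vectors vanish. -/
def NaturalBasis (m : Mul2 F A) {ι : Type*} (bs : Module.Basis ι F A) : Prop :=
  ∀ i j, i ≠ j → m (bs i) (bs j) = 0

/-- An evolution algebra: commutative with some finite natural basis. -/
def IsEvolutionAlg (m : Mul2 F A) : Prop :=
  (∀ x y, m x y = m y x) ∧
  ∃ (ι : Type) (_ : Fintype ι) (bs : Module.Basis ι F A), NaturalBasis m bs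

/-- The set of `x` with `x N = 0`, as a submodule. -/
def annIn (m : Mul2 F A) (N : Submodule F A) : Submodule F A where
  carrier := {x | ∀ y ∈ N, m x y = 0}
  add_mem' := by
    intro a b ha hb y hy
    simp [ha y hy, hb y hy]
  zero_mem' := by intro y hy; simp
  smul_mem' := by
    intro c a ha y hy
    simp [ha y hy]



section Aux

variable {F A : Type*} [Field F] [AddCommGroup A] [Module F A]

lemma mem_annOver {m : Mul2 F A} {N : Submodule F A} {x : A} :
    x ∈ annOver m N ↔ ∀ y, m x y ∈ N ∧ m y x ∈ N := Iff.rfl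

lemma mem_annA {m : Mul2 F A} {x : A} :
    x ∈ annA m ↔ ∀ y, m x y = 0 ∧ m y x = 0 := by
  simp [annA, mem_annOver]

lemma annSeries_one (m : Mul2 F A) : annSeries m 1 = annA m := rfl

lemma annSeries_two (m : Mul2 F A) : annSeries m 2 = annOver m (annSeries m 1) := rfl

lemma annSeries_three (m : Mul2 F A) : annSeries m 3 = annOver m (annSeries m 2) := rfl

lemma mul_mem_sqA (m : Mul2 F A) (x y : A) : m x y ∈ sqA m :=
  Submodule.subset_span ⟨x, trivial, y, trivial, rfl⟩

lemma annOver_mono {m : Mul2 F A} {N N' : Submodule F A} (h : N ≤ N') :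
    annOver m N ≤ annOver m N' := by
  intro x hx
  rw [mem_annOver] at hx ⊢
  exact fun y => ⟨h (hx y).1, h (hx y).2⟩

lemma exists_compl_of_disjoint [FiniteDimensional F A] {L U : Submodule F A}
    (h : U ⊓ L = ⊥) : ∃ J : Submodule F A, U ≤ J ∧ J ⊓ L = ⊥ ∧ J ⊔ L = ⊤ := by
  obtain ⟨C, hC⟩ := Submodule.exists_isCompl (L ⊔ U)
  refine ⟨U ⊔ C, le_sup_left, ?_, ?_⟩
  · rw [eq_bot_iff]
    intro x hx
    obtain ⟨hx1, hx2⟩ := Submodule.mem_inf.mp hx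
    obtain ⟨u, hu, c, hc, rfl⟩ := Submodule.mem_sup.mp hx1
    have hcm : c ∈ (L ⊔ U) ⊓ C := by
      refine Submodule.mem_inf.mpr ⟨?_, hc⟩
      have : (u + c) - u ∈ L ⊔ U :=
        Submodule.sub_mem _ (Submodule.mem_sup_left hx2) (Submodule.mem_sup_right hu)
      simpa using this
    rw [hC.inf_eq_bot] at hcm
    rw [Submodule.mem_bot] at hcm
    subst hcm
    have : u + 0 ∈ U ⊓ L := Submodule.mem_inf.mpr ⟨by simpa using hu, hx2⟩
    rw [h] at this
    exact this
  · rw [sup_right_comm, sup_comm U L, hC.sup_eq_top]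

lemma split_annOver {m : Mul2 F A} {I J N : Submodule F A}
    (hI : IsIdeal m I) (hJ : IsIdeal m J) (hinf : I ⊓ J = ⊥) (hsup : I ⊔ J = ⊤)
    {a b : A} (ha : a ∈ I) (hb : b ∈ J) (hx : a + b ∈ annOver m N) :
    a ∈ annOver m N := by
  rw [mem_annOver] at hx ⊢
  intro y
  obtain ⟨c, hc, d, hd, rfl⟩ := Submodule.mem_sup.mp
    (show y ∈ I ⊔ J by rw [hsup]; trivial)
  have had : m a d = 0 := by
    have : m a d ∈ I ⊓ J := Submodule.mem_inf.mpr ⟨(hI a ha d).1, (hJ d hd a).2⟩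
    rwa [hinf, Submodule.mem_bot] at this
  have hbc : m b c = 0 := by
    have : m b c ∈ I ⊓ J := Submodule.mem_inf.mpr ⟨(hI c hc b).2, (hJ b hb c).1⟩
    rwa [hinf, Submodule.mem_bot] at this
  have hda : m d a = 0 := by
    have : m d a ∈ I ⊓ J := Submodule.mem_inf.mpr ⟨(hI a ha d).2, (hJ d hd a).1⟩
    rwa [hinf, Submodule.mem_bot] at this
  have hcb : m c b = 0 := by
    have : m c b ∈ I ⊓ J := Submodule.mem_inf.mpr ⟨(hI c hc b).1, (hJ b hb c).2⟩
    rwa [hinf, Submodule.mem_bot] at this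
  constructor
  · have e : m a (c + d) = m (a + b) c := by
      simp [map_add, LinearMap.add_apply, had, hbc]
    rw [e]; exact (hx c).1
  · have e : m (c + d) a = m c (a + b) := by
      simp [map_add, LinearMap.add_apply, hda, hcb]
    rw [e]; exact (hx c).2

lemma ann_split {m : Mul2 F A} {I J N : Submodule F A}
    (hI : IsIdeal m I) (hJ : IsIdeal m J) (hinf : I ⊓ J = ⊥) (hsup : I ⊔ J = ⊤) :
    annOver m N = (annOver m N ⊓ I) ⊔ (annOver m N ⊓ J) := by
  refine le_antisymm ?_ (sup_le inf_le_left inf_le_left)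
  intro x hx
  obtain ⟨a, ha, b, hb, rfl⟩ := Submodule.mem_sup.mp
    (show x ∈ I ⊔ J by rw [hsup]; trivial)
  have haN : a ∈ annOver m N := split_annOver hI hJ hinf hsup ha hb hx
  have hbN : b ∈ annOver m N := by
    refine split_annOver hJ hI (by rw [inf_comm, hinf]) (by rw [sup_comm, hsup]) hb ha ?_
    rwa [add_comm]
  exact Submodule.add_mem_sup (Submodule.mem_inf.mpr ⟨haN, ha⟩)
    (Submodule.mem_inf.mpr ⟨hbN, hb⟩)

lemma aux_le {m : Mul2 F A} {I J : Submodule F A}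
    (hI : IsIdeal m I) (hJ : IsIdeal m J) (hsup : I ⊔ J = ⊤)
    (h3 : annSeries m 3 = ⊤) (hQ : annSeries m 2 ⊓ J ≤ annSeries m 1)
    (hann : annA m ≤ sqA m) : J ≤ I := by
  have hJ2 : J ≤ annSeries m 2 := by
    intro x hxJ
    have hx3 : x ∈ annOver m (annSeries m 2) := by
      rw [← annSeries_three, h3]; trivial
    rw [mem_annOver] at hx3
    rw [annSeries_two, mem_annOver]
    intro y
    refine ⟨hQ (Submodule.mem_inf.mpr ⟨(hx3 y).1, (hJ x hxJ y).1⟩),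
      hQ (Submodule.mem_inf.mpr ⟨(hx3 y).2, (hJ x hxJ y).2⟩)⟩
  have hJ1 : J ≤ annA m := by
    intro x hxJ
    rw [← annSeries_one]
    exact hQ (Submodule.mem_inf.mpr ⟨hJ2 hxJ, hxJ⟩)
  have hsq : sqA m ≤ I := by
    refine Submodule.span_le.mpr ?_
    rintro z ⟨x, -, y, -, rfl⟩
    obtain ⟨a, ha, b, hb, rfl⟩ := Submodule.mem_sup.mp
      (show x ∈ I ⊔ J by rw [hsup]; trivial)
    have hby : m b y = 0 := ((mem_annA.mp (hJ1 hb)) y).1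
    have : m (a + b) y = m a y := by
      simp [map_add, LinearMap.add_apply, hby]
    rw [SetLike.mem_coe, this]
    exact (hI a ha y).1
  exact le_trans hJ1 (le_trans hann hsq)

end Aux

/-- A nilpotent evolution algebra of type `[n,1,m]` is indecomposable if and
only if `Ann(E) ⊆ E²`. -/
theorem stmt17 {F E : Type*} [Field F] [AddCommGroup E] [Module F E]
    [FiniteDimensional F E] (m : Mul2 F E) (hev : IsEvolutionAlg m)
    (n mm : ℕ) (hn : 1 ≤ n) (hm : 1 ≤ mm)
    (h1 : Module.finrank F (annSeries m 1) = n)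
    (h2 : Module.finrank F (annSeries m 2) = n + 1)
    (h3 : annSeries m 3 = ⊤) (h2top : annSeries m 2 ≠ ⊤)
    (hdim : Module.finrank F E = n + 1 + mm) :
    ¬ Decomposable m ↔ annA m ≤ sqA m := by
  have hA12 : annSeries m 1 ≤ annSeries m 2 := by
    rw [annSeries_two]
    exact annOver_mono bot_le
  constructor
  · -- indecomposable → Ann ⊆ E²
    intro hnd
    by_contra hns
    apply hnd
    obtain ⟨v, hv, hvs⟩ := SetLike.not_le_iff_exists.mp hns
    have hv0 : v ≠ 0 := fun h => hvs (h ▸ (sqA m).zero_mem)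
    have hdisj : sqA m ⊓ Submodule.span F {v} = ⊥ := by
      rw [eq_bot_iff]
      intro x hx
      obtain ⟨hx1, hx2⟩ := Submodule.mem_inf.mp hx
      obtain ⟨c, rfl⟩ := Submodule.mem_span_singleton.mp hx2
      rcases eq_or_ne c 0 with rfl | hc
      · simp
      · exact absurd (by simpa [smul_smul, inv_mul_cancel₀ hc] using
          (sqA m).smul_mem c⁻¹ hx1) hvs
    obtain ⟨J, hUJ, hJinf, hJsup⟩ := exists_compl_of_disjoint hdisj
    have hIid : IsIdeal m (Submodule.span F {v}) := by
      intro x hx y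
      obtain ⟨c, rfl⟩ := Submodule.mem_span_singleton.mp hx
      have h1 := (mem_annA.mp hv y).1
      have h2 := (mem_annA.mp hv y).2
      constructor
      · simp [map_smul, h1]
      · simp [map_smul, h2]
    have hJid : IsIdeal m J := fun x _ y =>
      ⟨hUJ (mul_mem_sqA m x y), hUJ (mul_mem_sqA m y x)⟩
    have hIne : Submodule.span F {v} ≠ ⊥ := by
      simpa [Submodule.span_singleton_eq_bot] using hv0
    have hJne : J ≠ ⊥ := by
      intro hJbot
      have hr := Submodule.finrank_sup_add_finrank_inf_eq J (Submodule.span F {v})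
      rw [hJsup, hJinf, finrank_top, finrank_bot,
        finrank_span_singleton hv0, hdim] at hr
      rw [hJbot, finrank_bot] at hr
      omega
    exact ⟨Submodule.span F {v}, J, hIid, hJid, hIne, hJne,
      by rw [inf_comm, hJinf], by rw [sup_comm, hJsup]⟩
  · -- Ann ⊆ E² → indecomposable
    intro hann hdec
    obtain ⟨I, J, hI, hJ, hIne, hJne, hinf, hsup⟩ := hdec
    have hb1 : (annSeries m 1 ⊓ I) ⊓ (annSeries m 1 ⊓ J) = ⊥ := by
      rw [eq_bot_iff, ← hinf]
      exact inf_le_inf inf_le_right inf_le_right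
    have hb2 : (annSeries m 2 ⊓ I) ⊓ (annSeries m 2 ⊓ J) = ⊥ := by
      rw [eq_bot_iff, ← hinf]
      exact inf_le_inf inf_le_right inf_le_right
    have hs1 : annSeries m 1 = (annSeries m 1 ⊓ I) ⊔ (annSeries m 1 ⊓ J) := by
      rw [annSeries_one]
      exact ann_split hI hJ hinf hsup
    have hs2 : annSeries m 2 = (annSeries m 2 ⊓ I) ⊔ (annSeries m 2 ⊓ J) := by
      rw [annSeries_two]
      exact ann_split hI hJ hinf hsup
    have hd1 := Submodule.finrank_sup_add_finrank_inf_eq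
      (annSeries m 1 ⊓ I) (annSeries m 1 ⊓ J)
    have hd2 := Submodule.finrank_sup_add_finrank_inf_eq
      (annSeries m 2 ⊓ I) (annSeries m 2 ⊓ J)
    rw [← hs1, hb1, finrank_bot, h1] at hd1
    rw [← hs2, hb2, finrank_bot, h2] at hd2
    have hle1 : annSeries m 1 ⊓ I ≤ annSeries m 2 ⊓ I := inf_le_inf hA12 le_rfl
    have hle2 : annSeries m 1 ⊓ J ≤ annSeries m 2 ⊓ J := inf_le_inf hA12 le_rfl
    have hf1 := Submodule.finrank_mono hle1
    have hf2 := Submodule.finrank_mono hle2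
    have hcase : Module.finrank F ↥(annSeries m 2 ⊓ J) ≤
        Module.finrank F ↥(annSeries m 1 ⊓ J) ∨
        Module.finrank F ↥(annSeries m 2 ⊓ I) ≤
        Module.finrank F ↥(annSeries m 1 ⊓ I) := by omega
    rcases hcase with hc | hc
    · have heq : annSeries m 1 ⊓ J = annSeries m 2 ⊓ J :=
        Submodule.eq_of_le_of_finrank_le hle2 hc
      have hQ : annSeries m 2 ⊓ J ≤ annSeries m 1 := by
        rw [← heq]; exact inf_le_left
      have hJI : J ≤ I := aux_le hI hJ hsup h3 hQ hann
      have : J = ⊥ := by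
        rw [eq_bot_iff, ← hinf]
        exact le_inf hJI le_rfl
      exact hJne this
    · have heq : annSeries m 1 ⊓ I = annSeries m 2 ⊓ I :=
        Submodule.eq_of_le_of_finrank_le hle1 hc
      have hP : annSeries m 2 ⊓ I ≤ annSeries m 1 := by
        rw [← heq]; exact inf_le_left
      have hIJ : I ≤ J := aux_le hJ hI (by rw [sup_comm, hsup]) h3 hP hann
      have : I = ⊥ := by
        rw [eq_bot_iff, ← hinf]
        exact le_inf le_rfl hIJ
      exact hIne this
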